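/- Let Q be a (conservative) rate matrix and A : Set ι. Then for every real t ≥ 0, every x0 : ι, and every C : Set ι, ∑ y ∈ C, (Matrix.exp ℝ (t • Q)) x0 y − ∑ y ∈ C ∩ A, (Matrix.exp ℝ (t • Q_A)) x0 y ≤ 1 − ∑ y ∈ A, (Matrix.exp ℝ (t • Q_A)) x0 y, with equality when C = Set.univ; hence the supremum over all C : Set ι of the left-hand side equals 1 − ∑ y ∈ A, (Matrix.exp ℝ (t • Q_A)) x0 y. (Finite-state form of the error formula and error bound in Theorem 2.5(ii)–(iii) of the paper: the total variation distance between the law and its FSP approximation, padded with zeros outside A, equals one minus the mass of the approximation.) -/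

import Mathlib

/-- Mathlib's exponential, specialized to real matrices (`Matrix.exp ℝ`). -/
noncomputable def Matrix.exp (𝕂 : Type*) [Field 𝕂] {ι : Type*} [Fintype ι] [DecidableEq ι]
    [Algebra 𝕂 ℝ] (A : Matrix ι ι ℝ) : Matrix ι ι ℝ :=
  (NormedSpace.expSeries 𝕂 (Matrix ι ι ℝ)).sum A

open Classical in
/-- The truncation `Q_A` of `Q` to `A`: every state outside `A` is made absorbing. -/
noncomputable def Matrix.truncation {ι : Type*} (Q : Matrix ι ι ℝ) (A : Set ι) :
    Matrix ι ι ℝ :=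
  Matrix.of fun x y => if x ∈ A then Q x y else 0

set_option linter.unusedSectionVars false

section Aux

open NormedSpace

variable {ι : Type*} [Fintype ι] [DecidableEq ι]

attribute [local instance] Matrix.linftyOpNormedAddCommGroup Matrix.linftyOpNormedRing
  Matrix.linftyOpNormedAlgebra

noncomputable def entryCLM (x y : ι) : Matrix ι ι ℝ →L[ℝ] ℝ :=
  LinearMap.toContinuousLinearMap
    ((LinearMap.proj y).comp (LinearMap.proj x : (Matrix ι ι ℝ) →ₗ[ℝ] (ι → ℝ)))

lemma entryCLM_apply (x y : ι) (M : Matrix ι ι ℝ) : entryCLM x y M = M x y := rfl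

lemma exp_entry_hasSum (M : Matrix ι ι ℝ) (x y : ι) :
    HasSum (fun n : ℕ => (n.factorial : ℝ)⁻¹ * (M ^ n) x y) (exp M x y) := by
  have h : HasSum (fun n : ℕ => (n.factorial⁻¹ : ℝ) • M ^ n) (exp M) := by
    rw [exp_eq_tsum ℝ]
    exact (expSeries_summable' (𝕂 := ℝ) M).hasSum
  have h2 := (entryCLM x y).hasSum h
  simpa [entryCLM_apply, Matrix.smul_apply] using h2

lemma pow_entry_nonneg {M : Matrix ι ι ℝ} (h : ∀ x y, 0 ≤ M x y) :
    ∀ (n : ℕ) (x y : ι), 0 ≤ (M ^ n) x y := by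
  intro n
  induction n with
  | zero => intro x y; rw [pow_zero]; by_cases hxy : x = y <;> simp [Matrix.one_apply, hxy]
  | succ n ih =>
    intro x y
    rw [pow_succ, Matrix.mul_apply]
    exact Finset.sum_nonneg fun k _ => mul_nonneg (ih x k) (h k y)

lemma exp_entry_nonneg_of_nonneg {M : Matrix ι ι ℝ} (h : ∀ x y, 0 ≤ M x y) (x y : ι) :
    0 ≤ exp M x y := by
  refine (exp_entry_hasSum M x y).nonneg fun n => ?_
  exact mul_nonneg (by positivity) (pow_entry_nonneg h n x y)

/-- Entries of the exponential of a Metzler matrix are nonnegative. -/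
lemma exp_entry_nonneg_of_metzler {M : Matrix ι ι ℝ} (h : ∀ x y, x ≠ y → 0 ≤ M x y)
    (x y : ι) : 0 ≤ exp M x y := by
  set c : ℝ := ∑ z, |M z z| with hc
  have hc0 : 0 ≤ c := Finset.sum_nonneg fun z _ => abs_nonneg _
  have hcz : ∀ z, -M z z ≤ c := by
    intro z
    calc -M z z ≤ |M z z| := neg_le_abs _
    _ ≤ c := Finset.single_le_sum (f := fun z => |M z z|) (fun i _ => abs_nonneg _)
        (Finset.mem_univ z)
  set N : Matrix ι ι ℝ := M + c • (1 : Matrix ι ι ℝ) with hN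
  have hNnn : ∀ x y, 0 ≤ N x y := by
    intro x y
    by_cases hxy : x = y
    · subst hxy
      simp only [hN, Matrix.add_apply, Matrix.smul_apply, Matrix.one_apply_eq, smul_eq_mul,
        mul_one]
      linarith [hcz x]
    · simpa [hN, Matrix.add_apply, Matrix.one_apply_ne hxy] using h x y hxy
  have hM : M = N + (-c) • (1 : Matrix ι ι ℝ) := by
    simp [hN, add_assoc, ← add_smul]
  have hcomm : Commute N ((-c) • (1 : Matrix ι ι ℝ)) := by
    refine Commute.smul_right ?_ _
    exact Commute.one_right N
  have hexp : exp M = exp N * exp ((-c) • (1 : Matrix ι ι ℝ)) := by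
    rw [hM]; exact exp_add_of_commute hcomm
  have hscalar : exp ((-c) • (1 : Matrix ι ι ℝ)) = Real.exp (-c) • (1 : Matrix ι ι ℝ) := by
    have h1 : ((-c) • (1 : Matrix ι ι ℝ)) = algebraMap ℝ (Matrix ι ι ℝ) (-c) := by
      rw [Algebra.algebraMap_eq_smul_one]
    rw [h1]
    erw [← algebraMap_exp_comm (𝕂 := ℝ) (𝔸 := Matrix ι ι ℝ)]
    rw [Algebra.algebraMap_eq_smul_one, Real.exp_eq_exp_ℝ]
  rw [hexp, hscalar, Matrix.mul_apply]
  refine Finset.sum_nonneg fun k _ => mul_nonneg (exp_entry_nonneg_of_nonneg hNnn x k) ?_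
  by_cases hky : k = y <;> simp [Matrix.smul_apply, Matrix.one_apply, hky, (Real.exp_pos _).le]

lemma exp_row_sum_one {M : Matrix ι ι ℝ} (h : ∀ x, ∑ y, M x y = 0) (x : ι) :
    ∑ y, exp M x y = 1 := by
  have hpow : ∀ n : ℕ, 1 ≤ n → ∀ x, ∑ y, (M ^ n) x y = 0 := by
    intro n
    induction n with
    | zero => omega
    | succ n ih =>
      intro _ x
      rw [pow_succ']
      simp_rw [Matrix.mul_apply]
      rw [Finset.sum_comm]
      by_cases hn : 1 ≤ n
      · calc ∑ k, ∑ y, M x k * (M ^ n) k y = ∑ k, M x k * ∑ y, (M ^ n) k y := by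
              simp_rw [Finset.mul_sum]
        _ = 0 := by simp [ih hn]
      · have hn0 : n = 0 := by omega
        subst hn0
        have hk : ∀ k : ι, ∑ y, M x k * (M ^ 0) k y = M x k := by
          intro k; simp [Matrix.one_apply]
        rw [Finset.sum_congr rfl fun k _ => hk k, h x]
  have hsum : HasSum (fun n : ℕ => ∑ y, (n.factorial : ℝ)⁻¹ * (M ^ n) x y)
      (∑ y, exp M x y) := hasSum_sum (fun y _ => exp_entry_hasSum M x y)
  have heq : (fun n : ℕ => ∑ y, (n.factorial : ℝ)⁻¹ * (M ^ n) x y)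
      = fun n => if n = 0 then (1:ℝ) else 0 := by
    funext n
    rcases Nat.eq_zero_or_pos n with hn | hn
    · subst hn; simp [Matrix.one_apply, Finset.sum_ite_eq]
    · rw [← Finset.mul_sum, hpow n hn x, mul_zero, if_neg (by omega)]
  rw [heq] at hsum
  have h1 : HasSum (fun n : ℕ => if n = 0 then (1:ℝ) else 0) 1 := by
    simpa using hasSum_ite_eq (0 : ℕ) (1 : ℝ)
  exact hsum.unique h1

lemma exp_row_absorbing {M : Matrix ι ι ℝ} {x : ι} (h : ∀ y, M x y = 0) (y : ι) :
    exp M x y = if x = y then 1 else 0 := by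
  have hpow : ∀ n : ℕ, 1 ≤ n → ∀ y, (M ^ n) x y = 0 := by
    intro n _ y
    cases n with
    | zero => omega
    | succ n => rw [pow_succ', Matrix.mul_apply]; simp [h]
  have hsum := exp_entry_hasSum M x y
  have heq : (fun n : ℕ => (n.factorial : ℝ)⁻¹ * (M ^ n) x y)
      = fun n => if n = 0 then ((1 : Matrix ι ι ℝ) x y) else 0 := by
    funext n
    rcases Nat.eq_zero_or_pos n with hn | hn
    · subst hn; simp
    · rw [hpow n hn y, mul_zero, if_neg (by omega)]
  rw [heq] at hsum
  have h1 : HasSum (fun n : ℕ => if n = 0 then ((1 : Matrix ι ι ℝ) x y) else 0)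
      ((1 : Matrix ι ι ℝ) x y) := by
    simpa using hasSum_ite_eq (0 : ℕ) ((1 : Matrix ι ι ℝ) x y)
  rw [hsum.unique h1, Matrix.one_apply]

lemma truncation_metzler {Q : Matrix ι ι ℝ} (h : ∀ x y, x ≠ y → Q x y ≥ 0) (A : Set ι) :
    ∀ x y, x ≠ y → 0 ≤ (Q.truncation A) x y := by
  intro x y hxy
  simp only [Matrix.truncation, Matrix.of_apply]
  split
  · exact h x y hxy
  · exact le_refl 0

lemma smul_metzler {M : Matrix ι ι ℝ} (h : ∀ x y, x ≠ y → 0 ≤ M x y) {s : ℝ} (hs : 0 ≤ s) :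
    ∀ x y, x ≠ y → 0 ≤ (s • M) x y :=
  fun x y hxy => mul_nonneg hs (h x y hxy)

lemma trunc_entry_le {Q : Matrix ι ι ℝ} (hMetzler : ∀ x y, x ≠ y → Q x y ≥ 0)
    (A : Set ι) {t : ℝ} (ht : 0 ≤ t) (x0 : ι) {y : ι} (hy : y ∈ A) :
    exp (t • Q.truncation A) x0 y ≤ exp (t • Q) x0 y := by
  classical
  set T := Q.truncation A with hT
  have hTmetz : ∀ x y, x ≠ y → 0 ≤ T x y := truncation_metzler hMetzler A
  have hTrow : ∀ u : ι, u ∉ A → ∀ v, T u v = 0 := by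
    intro u hu v; simp [hT, Matrix.truncation, hu]
  set g : ℝ → ℝ := fun s => (exp (s • Q) * exp ((t - s) • T)) x0 y with hg
  have hderiv : ∀ s : ℝ, HasDerivAt g
      ((exp (s • Q) * ((Q - T) * exp ((t - s) • T))) x0 y) s := by
    intro s
    have h1 : HasDerivAt (fun u : ℝ => exp (u • Q)) (Q * exp (s • Q)) s :=
      hasDerivAt_exp_smul_const' Q s
    have hlin : HasDerivAt (fun u : ℝ => t - u) (-1) s := by
      simpa using (hasDerivAt_id s).const_sub t
    have h2' : HasDerivAt (fun u : ℝ => exp (u • T)) (T * exp ((t - s) • T)) (t - s) :=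
      hasDerivAt_exp_smul_const' T (t - s)
    have h2 : HasDerivAt (fun u : ℝ => exp ((t - u) • T))
        ((-1 : ℝ) • (T * exp ((t - s) • T))) s := h2'.scomp s hlin
    have h3 := h1.mul h2
    have h4 := (entryCLM x0 y).hasFDerivAt.comp_hasDerivAt s h3
    have hcQ : Q * exp (s • Q) = exp (s • Q) * Q :=
      (((Commute.refl Q).smul_right s).exp_right).symm.eq.symm
    have hid : Q * exp (s • Q) * exp ((t - s) • T)
        + exp (s • Q) * ((-1 : ℝ) • (T * exp ((t - s) • T)))
        = exp (s • Q) * ((Q - T) * exp ((t - s) • T)) := by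
      rw [hcQ, neg_one_smul]
      noncomm_ring
    have h5 : HasDerivAt (fun u : ℝ => entryCLM x0 y (exp (u • Q) * exp ((t - u) • T)))
        (entryCLM x0 y (exp (s • Q) * ((Q - T) * exp ((t - s) • T)))) s := by
      rw [← hid]; exact h4
    exact h5
  have hDnonneg : ∀ s : ℝ, 0 ≤ s → s ≤ t →
      0 ≤ (exp (s • Q) * ((Q - T) * exp ((t - s) • T))) x0 y := by
    intro s hs0 hst
    rw [Matrix.mul_apply]
    refine Finset.sum_nonneg fun u _ => mul_nonneg
      (exp_entry_nonneg_of_metzler (smul_metzler hMetzler hs0) x0 u) ?_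
    rw [Matrix.mul_apply]
    by_cases hu : u ∈ A
    · have : ∀ v, (Q - T) u v = 0 := by
        intro v; simp [hT, Matrix.truncation, hu]
      simp [this]
    · have hGrow : ∀ w, exp ((t - s) • T) u w = if u = w then 1 else 0 := by
        intro w
        exact exp_row_absorbing (fun w => by simp [hTrow u hu w]) w
      refine Finset.sum_nonneg fun v _ => ?_
      by_cases hvu : v = u
      · subst hvu
        have huy : v ≠ y := fun h => hu (h ▸ hy)
        rw [hGrow y, if_neg huy, mul_zero]
      · have hEv : 0 ≤ exp ((t - s) • T) v y :=
          exp_entry_nonneg_of_metzler (smul_metzler hTmetz (by linarith)) v y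
        have hQuv : 0 ≤ (Q - T) u v := by
          simp only [Matrix.sub_apply, hTrow u hu v, sub_zero]
          by_cases huv : u = v
          · subst huv; exact absurd rfl hvu
          · exact hMetzler u v huv
        exact mul_nonneg hQuv hEv
  have hcont : Continuous g := by
    have : Differentiable ℝ g := fun s => (hderiv s).differentiableAt
    exact this.continuous
  have hmono : MonotoneOn g (Set.Icc 0 t) := by
    refine monotoneOn_of_deriv_nonneg (convex_Icc 0 t) hcont.continuousOn
      (fun s hs => ((hderiv s).differentiableAt).differentiableWithinAt) ?_
    intro s hs
    rw [interior_Icc] at hs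
    rw [(hderiv s).deriv]
    exact hDnonneg s hs.1.le hs.2.le
  have hle : g 0 ≤ g t := hmono ⟨le_refl 0, ht⟩ ⟨ht, le_refl t⟩ ht
  have hg0 : g 0 = exp (t • T) x0 y := by
    simp [hg, zero_smul, exp_zero, sub_zero]
  have hgt : g t = exp (t • Q) x0 y := by
    simp [hg, sub_self, zero_smul, exp_zero]
  rw [hg0, hgt] at hle
  exact hle

lemma finsum_mem_set_eq_toFinset_sum (S : Set ι) (f : ι → ℝ) [Fintype S] :
    ∑ᶠ y ∈ S, f y = ∑ y ∈ S.toFinset, f y := by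
  rw [← finsum_mem_coe_finset, Set.coe_toFinset]

end Aux

set_option linter.unusedSectionVars false in
/-- Finite-state error formula for the FSP scheme: for a conservative rate matrix `Q` and a
truncation `A`, the difference between the law and its FSP approximation (padded with zeros
outside `A`) on any set `C` is at most one minus the mass of the approximation, with equality
at `C = Set.univ`; hence the total variation distance (the supremum over `C`) equals one minus
the mass of the approximation. -/
theorem matrix_fsp_error_formula {ι : Type*} [Fintype ι] [DecidableEq ι] [Nonempty ι]
    (Q : Matrix ι ι ℝ) (hMetzler : ∀ x y, x ≠ y → Q x y ≥ 0)
    (hrow : ∀ x, ∑ y, Q x y = 0) (A : Set ι) :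
    ∀ t : ℝ, 0 ≤ t → ∀ x0 : ι,
      (∀ C : Set ι,
        (∑ᶠ y ∈ C, Matrix.exp ℝ (t • Q) x0 y) -
            (∑ᶠ y ∈ C ∩ A, Matrix.exp ℝ (t • Q.truncation A) x0 y) ≤
          1 - ∑ᶠ y ∈ A, Matrix.exp ℝ (t • Q.truncation A) x0 y) ∧
      ((∑ᶠ y ∈ (Set.univ : Set ι), Matrix.exp ℝ (t • Q) x0 y) -
          (∑ᶠ y ∈ ((Set.univ : Set ι) ∩ A), Matrix.exp ℝ (t • Q.truncation A) x0 y) =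
        1 - ∑ᶠ y ∈ A, Matrix.exp ℝ (t • Q.truncation A) x0 y) ∧
      ((⨆ C : Set ι,
          ((∑ᶠ y ∈ C, Matrix.exp ℝ (t • Q) x0 y) -
            (∑ᶠ y ∈ C ∩ A, Matrix.exp ℝ (t • Q.truncation A) x0 y))) =
        1 - ∑ᶠ y ∈ A, Matrix.exp ℝ (t • Q.truncation A) x0 y) := by
  intro t ht x0
  classical
  have hMexp : ∀ M : Matrix ι ι ℝ, Matrix.exp ℝ M = NormedSpace.exp M := fun M => by
    letI := Matrix.linftyOpNormedRing (n := ι) (α := ℝ)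
    letI := Matrix.linftyOpNormedAlgebra (n := ι) (α := ℝ) (R := ℝ)
    exact (congr_fun (NormedSpace.exp_eq_expSeries_sum ℝ) M).symm
  set P : Matrix ι ι ℝ := Matrix.exp ℝ (t • Q) with hPdef
  set E : Matrix ι ι ℝ := Matrix.exp ℝ (t • Q.truncation A) with hEdef
  have hPsum : ∑ y, P x0 y = 1 := by
    rw [hPdef, hMexp]
    exact exp_row_sum_one (fun x => by
      simp [Matrix.smul_apply, ← Finset.mul_sum, hrow]) x0
  have hPnn : ∀ y, 0 ≤ P x0 y := fun y => by
    rw [hPdef, hMexp]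
    exact exp_entry_nonneg_of_metzler (smul_metzler hMetzler ht) x0 y
  have hEP : ∀ y ∈ A, E x0 y ≤ P x0 y := fun y hy => by
    rw [hPdef, hEdef, hMexp, hMexp]
    exact trunc_entry_le hMetzler A ht x0 hy
  -- part 1: the inequality for every C
  have part1 : ∀ C : Set ι,
      (∑ᶠ y ∈ C, P x0 y) - (∑ᶠ y ∈ C ∩ A, E x0 y) ≤ 1 - ∑ᶠ y ∈ A, E x0 y := by
    intro C
    rw [finsum_mem_set_eq_toFinset_sum, finsum_mem_set_eq_toFinset_sum,
      finsum_mem_set_eq_toFinset_sum, Set.toFinset_inter]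
    set FC := C.toFinset
    set FA := A.toFinset
    have h1 : ∑ y ∈ FA \ FC, E x0 y ≤ ∑ y ∈ FA \ FC, P x0 y := by
      refine Finset.sum_le_sum fun y hy => ?_
      have hyA : y ∈ A := by
        have := (Finset.mem_sdiff.mp hy).1
        simpa [FA, Set.mem_toFinset] using this
      exact hEP y hyA
    have h2 : ∑ y ∈ FA \ FC, P x0 y ≤ ∑ y ∈ Finset.univ \ FC, P x0 y :=
      Finset.sum_le_sum_of_subset_of_nonneg
        (Finset.sdiff_subset_sdiff (Finset.subset_univ FA) subset_rfl)
        (fun y _ _ => hPnn y)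
    have h3 : ∑ y ∈ FA ∩ FC, E x0 y + ∑ y ∈ FA \ FC, E x0 y = ∑ y ∈ FA, E x0 y :=
      Finset.sum_inter_add_sum_sdiff FA FC (fun y => E x0 y)
    have h4 : ∑ y ∈ Finset.univ ∩ FC, P x0 y + ∑ y ∈ Finset.univ \ FC, P x0 y
        = ∑ y ∈ Finset.univ, P x0 y :=
      Finset.sum_inter_add_sum_sdiff Finset.univ FC (fun y => P x0 y)
    have h5 : Finset.univ ∩ FC = FC := Finset.univ_inter FC
    have h6 : FC ∩ FA = FA ∩ FC := Finset.inter_comm FC FA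
    rw [h5] at h4
    rw [h6]
    linarith [hPsum]
  -- part 2: equality at univ
  have part2 : (∑ᶠ y ∈ (Set.univ : Set ι), P x0 y) -
      (∑ᶠ y ∈ ((Set.univ : Set ι) ∩ A), E x0 y) = 1 - ∑ᶠ y ∈ A, E x0 y := by
    rw [Set.univ_inter, finsum_mem_set_eq_toFinset_sum, Set.toFinset_univ, hPsum]
  refine ⟨part1, part2, ?_⟩
  apply le_antisymm
  · have := ciSup_le (ι := Set ι) (f := fun C : Set ι => (∑ᶠ y ∈ C, P x0 y) - (∑ᶠ y ∈ C ∩ A, E x0 y)) part1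
    exact this
  · rw [← part2]
    exact le_ciSup (f := fun C : Set ι => (∑ᶠ y ∈ C, P x0 y) - (∑ᶠ y ∈ C ∩ A, E x0 y))
      (Set.Finite.bddAbove (Set.finite_range _)) (Set.univ : Set ι)
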